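/- Let G be a biconnected outerplanar graph whose vertices are labeled 1,...,n in order along its Hamiltonian cycle, and let {u,v} with u < v be an inner edge of G. Then 1 < v - u < n - 1, and the subgraph of G induced by the vertex set {u, u+1, ..., v} is biconnected and outerplanar, with Hamiltonian cycle formed by the path u, u+1, ..., v along the original cycle together with the edge {u,v}. -/

import Mathlib

open SimpleGraph

universe u₁ u₂

variable {V : Type u₁} {W : Type u₂}

/-- `H` is a minor of `G`: there is a branch decomposition, i.e. a partial map
assigning to some vertices of `G` a vertex of `H`, whose branch sets are
nonempty and connected, and such that every edge of `H` is realized by an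
edge of `G` between the corresponding branch sets. -/
def IsMinorOf (H : SimpleGraph W) (G : SimpleGraph V) : Prop :=
  ∃ f : V → Option W,
    (∀ w : W, (G.induce {v | f v = some w}).Connected) ∧
    (∀ w₁ w₂ : W, H.Adj w₁ w₂ →
      ∃ v₁ v₂ : V, f v₁ = some w₁ ∧ f v₂ = some w₂ ∧ G.Adj v₁ v₂)

/-- The cone over `G`: add a new apex vertex adjacent to all vertices of `G`. -/
def cone (G : SimpleGraph V) : SimpleGraph (Option V) :=
  SimpleGraph.fromRel (fun a b =>
    a = none ∨ ∃ u v : V, a = some u ∧ b = some v ∧ G.Adj u v)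

/-- A graph is planar iff it has neither a `K₅` nor a `K₃,₃` minor (Wagner). -/
def Planar (G : SimpleGraph V) : Prop :=
  ¬ IsMinorOf (⊤ : SimpleGraph (Fin 5)) G ∧
  ¬ IsMinorOf (completeBipartiteGraph (Fin 3) (Fin 3)) G

/-- A graph is outerplanar iff the cone over it is planar (equivalently, it
has a planar embedding with all vertices on the outer face). -/
def Outerplanar (G : SimpleGraph V) : Prop := Planar (cone G)

/-- `v` is a cut vertex of `G`: `G` is connected but deleting `v` disconnects it. -/
def IsCutVertex (G : SimpleGraph V) (v : V) : Prop :=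
  G.Connected ∧ ¬ (G.induce {u | u ≠ v}).Connected

/-- `G` is biconnected: connected with no cut vertex. -/
def Biconnected (G : SimpleGraph V) : Prop :=
  G.Connected ∧ ∀ v : V, ¬ IsCutVertex G v

/-- Degree of a vertex, as the cardinality of its neighbour set. -/
noncomputable def deg (G : SimpleGraph V) (v : V) : ℕ := (G.neighborSet v).ncard

/-- Two `a`-`b` walks are internally vertex-disjoint if they share no
vertices other than `a` and `b`. -/
def InternallyDisjoint {G : SimpleGraph V} {a b : V} (p q : G.Walk a b) : Prop :=
  ∀ w : V, w ∈ p.support → w ∈ q.support → w = a ∨ w = b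

/-- A chain of `G` with endpoints `a` and `b`, represented by the path `p`
from `a` to `b`: all internal vertices have degree two, and either both
endpoints have degree greater than two (a path chain), or the chain is a
cycle of degree-two vertices, represented by a Hamiltonian-on-its-support
path between two adjacent vertices `a` and `b` of the cycle. -/
def IsGraphChain (G : SimpleGraph V) {a b : V} (p : G.Walk a b) : Prop :=
  p.IsPath ∧ 2 ≤ p.length ∧
    (∀ v ∈ p.support, v ≠ a → v ≠ b → deg G v = 2) ∧
    ((2 < deg G a ∧ 2 < deg G b) ∨
      (G.Adj a b ∧ ∀ v ∈ p.support, deg G v = 2))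

/-- The graph on the endpoints of the edges in `E'`, with edge set `E'`. -/
def graphOn (E' : Set (Sym2 V)) :
    SimpleGraph {v : V | ∃ e ∈ E', v ∈ e} :=
  (SimpleGraph.fromEdgeSet E').induce {v : V | ∃ e ∈ E', v ∈ e}

/-- In a biconnected outerplanar graph on `Fin n` whose Hamiltonian cycle
visits `0, 1, …, n-1` in this cyclic order, every inner edge `{u,v}` with
`u < v` satisfies `1 < v - u < n - 1`, and the subgraph induced on
`{u, …, v}` is biconnected outerplanar with Hamiltonian cycle consisting of
the path `u, u+1, …, v` together with the edge `{u,v}`. -/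
lemma walk_induce_transfer {α : Type*} {H : SimpleGraph α} {s : Set α} :
    ∀ {a b : α} (p : H.Walk a b), (∀ x ∈ p.support, x ∈ s) →
    ∀ (ha : a ∈ s) (hb : b ∈ s),
    ∃ q : (H.induce s).Walk ⟨a, ha⟩ ⟨b, hb⟩,
      q.support.map Subtype.val = p.support ∧
      q.edges.map (Sym2.map Subtype.val) = p.edges
  | a, _, SimpleGraph.Walk.nil, _, ha, hb => ⟨SimpleGraph.Walk.nil, by simp, by simp⟩
  | a, b, @SimpleGraph.Walk.cons _ _ _ c _ h p, hs, ha, hb => by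
    have hc : c ∈ s := hs c (by simp)
    obtain ⟨q, hq1, hq2⟩ := walk_induce_transfer p
      (fun x hx => hs x (by simp [hx])) hc hb
    refine ⟨SimpleGraph.Walk.cons (by exact h : (H.induce s).Adj ⟨a, ha⟩ ⟨c, hc⟩) q, ?_, ?_⟩
    · exact congrArg (a :: ·) hq1
    · exact congrArg (s(a, c) :: ·) hq2

lemma chain_walk {n : ℕ} [NeZero n] {G : SimpleGraph (Fin n)}
    (hadj : ∀ i : Fin n, G.Adj i (i + 1)) :
    ∀ (d : ℕ) (a b : Fin n), a.val + d = b.val →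
    ∃ p : G.Walk a b, p.support.map Fin.val = List.range' a.val (d + 1) ∧
      p.edges.map (Sym2.map Fin.val) = (List.range' a.val d).map (fun k => s(k, k + 1))
  | 0, a, b, hab => by
    have : a = b := Fin.ext (by omega)
    subst this
    exact ⟨SimpleGraph.Walk.nil, by simp, by simp⟩
  | (d + 1), a, b, hab => by
    have hval : (a + 1).val = a.val + 1 := by
      have hn : a.val + 1 < n := by have := b.isLt; omega
      have h1 : (1 : Fin n).val = 1 := by
        have : 1 < n := by omega
        simp [Fin.val_one', Nat.mod_eq_of_lt this]
      rw [Fin.add_def]; simp [h1, Nat.mod_eq_of_lt hn]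
    obtain ⟨p, hp1, hp2⟩ := chain_walk hadj d (a + 1) b (by omega)
    refine ⟨SimpleGraph.Walk.cons (hadj a) p, ?_, ?_⟩
    · rw [List.range'_succ]
      simp [hp1, hval]
    · rw [List.range'_succ]
      simp [hp2, Sym2.map_pair_eq, hval]

lemma cone_adj_map {G : SimpleGraph V} {s : Set V} {b b' : Option s}
    (h : (cone (G.induce s)).Adj b b') :
    (cone G).Adj (Option.map Subtype.val b) (Option.map Subtype.val b') := by
  have hinj : Function.Injective (Option.map (Subtype.val : s → V)) :=
    Option.map_injective Subtype.val_injective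
  obtain ⟨hne, h | h⟩ := h <;>
  · refine ⟨fun he => hne (hinj he), ?_⟩
    first
    | (rcases h with h | ⟨x, y, rfl, rfl, hxy⟩
       · exact Or.inl (Or.inl (by simp [h]))
       · exact Or.inl (Or.inr ⟨x.val, y.val, rfl, rfl, hxy⟩))
    | (rcases h with h | ⟨x, y, rfl, rfl, hxy⟩
       · exact Or.inr (Or.inl (by simp [h]))
       · exact Or.inr (Or.inr ⟨x.val, y.val, rfl, rfl, hxy⟩))

lemma isMinorOf_of_cone_induce {G : SimpleGraph V} {s : Set V} {K : SimpleGraph W}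
    (h : IsMinorOf K (cone (G.induce s))) : IsMinorOf K (cone G) := by
  classical
  obtain ⟨f, hconn, hedge⟩ := h
  set ι : Option s → Option V := Option.map Subtype.val with hι
  refine ⟨fun a => match a with
    | none => f none
    | some v => if h : v ∈ s then f (some ⟨v, h⟩) else none, ?_, ?_⟩
  · intro w
    have hset : {a | (match a with
        | none => f none
        | some v => if h : v ∈ s then f (some ⟨v, h⟩) else none) = some w}
        = ι '' {b | f b = some w} := by
      ext a
      constructor
      · intro ha
        match a with
        | none => exact ⟨none, ha, rfl⟩
        | some v =>
          simp only [Set.mem_setOf_eq] at ha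
          by_cases hv : v ∈ s
          · rw [dif_pos hv] at ha
            exact ⟨some ⟨v, hv⟩, ha, rfl⟩
          · rw [dif_neg hv] at ha; exact absurd ha (by simp)
      · rintro ⟨b, hb, rfl⟩
        match b with
        | none => exact hb
        | some x => simpa [ι, dif_pos x.2] using hb
    rw [hset]
    have hc := hconn w
    refine hc.map ⟨fun b => ⟨ι b.val, b.val, b.2, rfl⟩, ?_⟩ ?_
    · intro b b' hbb
      exact cone_adj_map hbb
    · rintro ⟨a, b, hb, rfl⟩
      exact ⟨⟨b, hb⟩, rfl⟩
  · intro w₁ w₂ hw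
    obtain ⟨v₁, v₂, h1, h2, hadj⟩ := hedge w₁ w₂ hw
    refine ⟨ι v₁, ι v₂, ?_, ?_, cone_adj_map hadj⟩
    · match v₁ with
      | none => exact h1
      | some x => simpa [ι, dif_pos x.2] using h1
    · match v₂ with
      | none => exact h2
      | some x => simpa [ι, dif_pos x.2] using h2

lemma outerplanar_induce {G : SimpleGraph V} {s : Set V} (h : Outerplanar G) :
    Outerplanar (G.induce s) :=
  ⟨fun hm => h.1 (isMinorOf_of_cone_induce hm),
   fun hm => h.2 (isMinorOf_of_cone_induce hm)⟩

theorem induce_of_inner_edge {n : ℕ} [NeZero n] (hn : 3 ≤ n) {G : SimpleGraph (Fin n)}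
    (hB : Biconnected G) (hO : Outerplanar G)
    {a : Fin n} (c : G.Walk a a) (hc : c.IsHamiltonianCycle)
    (hce : {e | e ∈ c.edges} = {e : Sym2 (Fin n) | ∃ i : Fin n, e = s(i, i + 1)})
    {u v : Fin n} (huv : G.Adj u v) (hlt : u < v)
    (hinner : ∀ i : Fin n, s(u, v) ≠ s(i, i + 1)) :
    1 < v.val - u.val ∧ v.val - u.val < n - 1 ∧
      Biconnected (G.induce (Set.Icc u v)) ∧
      Outerplanar (G.induce (Set.Icc u v)) ∧
      ∃ c' : (G.induce (Set.Icc u v)).Walk ⟨u, le_refl u, le_of_lt hlt⟩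
          ⟨u, le_refl u, le_of_lt hlt⟩,
        c'.IsHamiltonianCycle ∧
          {e : Sym2 (Fin n) | ∃ e' ∈ c'.edges, Sym2.map Subtype.val e' = e} =
            insert s(u, v)
              {e : Sym2 (Fin n) | ∃ i : Fin n, u ≤ i ∧ i < v ∧ e = s(i, i + 1)} := by
  classical
  have hadj : ∀ i : Fin n, G.Adj i (i + 1) := fun i =>
    c.adj_of_mem_edges ((Set.ext_iff.mp hce s(i, i + 1)).mpr ⟨i, rfl⟩)
  have huvlt : u.val < v.val := hlt
  have hvn : v.val < n := v.isLt
  have hplus : ∀ i : Fin n, i.val + 1 < n → (i + 1).val = i.val + 1 := by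
    intro i hi
    have h1 : (1 : Fin n).val = 1 := by
      have : 1 < n := by omega
      simp [Fin.val_one', Nat.mod_eq_of_lt this]
    rw [Fin.add_def]; simp [h1, Nat.mod_eq_of_lt hi]
  -- bound 1
  have h1 : 1 < v.val - u.val := by
    by_contra h
    have hv : v.val = u.val + 1 := by omega
    have : v = u + 1 := Fin.ext (by rw [hplus u (by omega)]; omega)
    exact hinner u (by rw [this])
  -- bound 2
  have h2 : v.val - u.val < n - 1 := by
    by_contra h
    have hu0 : u.val = 0 := by omega
    have hv1 : v.val = n - 1 := by omega
    have hvu : v + 1 = u := by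
      apply Fin.ext
      rw [Fin.add_def]
      have hone : (1 : Fin n).val = 1 := by
        have : 1 < n := by omega
        simp [Fin.val_one', Nat.mod_eq_of_lt this]
      simp only [hone, hv1, hu0]
      rw [Nat.sub_add_cancel (by omega), Nat.mod_self]
    exact hinner v (by rw [hvu, Sym2.eq_swap])
  refine ⟨h1, h2, ?_, ?_, ?_⟩
  · -- Biconnected
    have huS : u ∈ Set.Icc u v := ⟨le_refl u, le_of_lt hlt⟩
    have hvS : v ∈ Set.Icc u v := ⟨le_of_lt hlt, le_refl v⟩
    have reachH : ∀ (x y : Fin n), x.val ≤ y.val → ∀ (hxS : x ∈ Set.Icc u v)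
        (hyS : y ∈ Set.Icc u v),
        ∃ w : (G.induce (Set.Icc u v)).Walk ⟨x, hxS⟩ ⟨y, hyS⟩,
          ∀ z ∈ w.support, x.val ≤ z.val.val ∧ z.val.val ≤ y.val := by
      intro x y hxy hxS hyS
      obtain ⟨p', hp1', -⟩ := chain_walk hadj (y.val - x.val) x y (by omega)
      have hsup : ∀ z ∈ p'.support, x.val ≤ z.val ∧ z.val ≤ y.val := by
        intro z hz
        have hm : z.val ∈ List.range' x.val (y.val - x.val + 1) := by
          rw [← hp1']; exact List.mem_map_of_mem hz
        rw [List.mem_range'_1] at hm; omega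
      obtain ⟨q', hq1', -⟩ := walk_induce_transfer p' (fun z hz => Set.mem_Icc.mpr
        ⟨Fin.le_def.mpr (le_trans (Fin.le_def.mp hxS.1) (hsup z hz).1),
          Fin.le_def.mpr (le_trans (hsup z hz).2 (Fin.le_def.mp hyS.2))⟩) hxS hyS
      refine ⟨q', fun z hz => hsup z.val ?_⟩
      rw [← hq1']; exact List.mem_map_of_mem hz
    constructor
    · -- Connected
      haveI : Nonempty ↥(Set.Icc u v) := ⟨⟨u, huS⟩⟩
      refine SimpleGraph.Connected.mk fun x y => ?_
      obtain ⟨wx, -⟩ := reachH u x.val (Fin.le_def.mp x.2.1) huS x.2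
      obtain ⟨wy, -⟩ := reachH u y.val (Fin.le_def.mp y.2.1) huS y.2
      exact (wx.reachable).symm.trans wy.reachable
    · -- no cut vertex
      intro x hcut
      refine hcut.2 ?_
      have key : ∀ (ya yb : {y : ↥(Set.Icc u v) // y ≠ x}), ya.1.1.val ≤ yb.1.1.val →
          (x.1.val < ya.1.1.val ∨ yb.1.1.val < x.1.val) →
          ((G.induce (Set.Icc u v)).induce {y | y ≠ x}).Reachable ya yb := by
        intro ya yb hab havoid
        obtain ⟨w, hw⟩ := reachH ya.1.1 yb.1.1 hab ya.1.2 yb.1.2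
        have hsup : ∀ z ∈ w.support, z ∈ {y : ↥(Set.Icc u v) | y ≠ x} := by
          intro z hz hzx
          have hb := hw z hz
          rw [hzx] at hb
          omega
        obtain ⟨w', -, -⟩ := walk_induce_transfer w hsup ya.2 yb.2
        exact w'.reachable
      by_cases hxu : x.1 = u
      · have hvne : (⟨v, hvS⟩ : ↥(Set.Icc u v)) ≠ x := by
          intro hh
          exact hlt.ne' ((congrArg Subtype.val hh).trans hxu)
        have hbase : ∀ y : {y : ↥(Set.Icc u v) // y ≠ x},
            ((G.induce (Set.Icc u v)).induce {y | y ≠ x}).Reachable y ⟨⟨v, hvS⟩, hvne⟩ := by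
          intro y
          refine key y ⟨⟨v, hvS⟩, hvne⟩ (Fin.le_def.mp y.1.2.2) (Or.inl ?_)
          have e1 : x.1.val = u.val := congrArg Fin.val hxu
          have e2 := Fin.le_def.mp y.1.2.1
          have e3 : y.1.1.val ≠ x.1.val := fun hh => y.2 (Subtype.ext (Fin.ext hh))
          omega
        haveI : Nonempty ↥{y : ↥(Set.Icc u v) | y ≠ x} := ⟨⟨⟨v, hvS⟩, hvne⟩⟩
        exact SimpleGraph.Connected.mk fun ya yb => (hbase ya).trans (hbase yb).symm
      · have hune : (⟨u, huS⟩ : ↥(Set.Icc u v)) ≠ x := fun hh => hxu (by rw [← hh])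
        have hxugt : u.val < x.1.val := by
          have h1' := Fin.le_def.mp x.2.1
          have h2' : x.1.val ≠ u.val := fun hh => hxu (Fin.ext hh)
          omega
        have hbase : ∀ y : {y : ↥(Set.Icc u v) // y ≠ x},
            ((G.induce (Set.Icc u v)).induce {y | y ≠ x}).Reachable y ⟨⟨u, huS⟩, hune⟩ := by
          intro y
          rcases lt_trichotomy y.1.1.val x.1.val with hlt' | heq | hgt
          · exact (key ⟨⟨u, huS⟩, hune⟩ y (Fin.le_def.mp y.1.2.1) (Or.inr hlt')).symm
          · exact absurd (Subtype.ext (Fin.ext heq)) y.2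
          · have hxv : x.1.val < v.val := lt_of_lt_of_le hgt (Fin.le_def.mp y.1.2.2)
            have hvne : (⟨v, hvS⟩ : ↥(Set.Icc u v)) ≠ x := by
              intro hh
              rw [← hh] at hxv
              exact lt_irrefl _ hxv
            have r1 := key y ⟨⟨v, hvS⟩, hvne⟩ (Fin.le_def.mp y.1.2.2) (Or.inl hgt)
            have r2 : ((G.induce (Set.Icc u v)).induce {y | y ≠ x}).Adj
                ⟨⟨v, hvS⟩, hvne⟩ ⟨⟨u, huS⟩, hune⟩ := huv.symm
            exact r1.trans r2.reachable
        haveI : Nonempty ↥{y : ↥(Set.Icc u v) | y ≠ x} := ⟨⟨⟨u, huS⟩, hune⟩⟩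
        exact SimpleGraph.Connected.mk fun ya yb => (hbase ya).trans (hbase yb).symm
  · exact outerplanar_induce hO
  · -- Hamiltonian cycle
    set d := v.val - u.val with hd
    obtain ⟨p, hp1, hp2⟩ := chain_walk hadj d u v (by omega)
    have hpsup : ∀ x ∈ p.support, x ∈ Set.Icc u v := by
      intro x hx
      have hm : x.val ∈ List.range' u.val (d + 1) := by
        rw [← hp1]; exact List.mem_map_of_mem hx
      rw [List.mem_range'_1] at hm
      exact ⟨Fin.le_def.mpr (by omega), Fin.le_def.mpr (by omega)⟩
    obtain ⟨q, hq1, hq2⟩ := walk_induce_transfer p hpsup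
      ⟨le_refl u, le_of_lt hlt⟩ ⟨le_of_lt hlt, le_refl v⟩
    have huv' : (G.induce (Set.Icc u v)).Adj
        ⟨u, le_refl u, le_of_lt hlt⟩ ⟨v, le_of_lt hlt, le_refl v⟩ := huv
    refine ⟨SimpleGraph.Walk.cons huv' q.reverse, ?_, ?_⟩
    · -- IsHamiltonianCycle
      have hnods : q.support.Nodup := by
        have h0 : ((q.support.map Subtype.val).map Fin.val).Nodup := by
          rw [hq1, hp1]; exact List.nodup_range' _
        exact (h0.of_map _).of_map _
      have hpath : q.reverse.IsPath := by
        rw [SimpleGraph.Walk.isPath_def, SimpleGraph.Walk.support_reverse]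
        exact List.nodup_reverse.mpr hnods
      have hnotmem : s(⟨u, le_refl u, le_of_lt hlt⟩,
          (⟨v, le_of_lt hlt, le_refl v⟩ : Set.Icc u v)) ∉ q.reverse.edges := by
        rw [SimpleGraph.Walk.edges_reverse, List.mem_reverse]
        intro hmem
        have hsuv : s(u, v) ∈ p.edges := by
          rw [← hq2]
          simpa [Sym2.map_pair_eq] using List.mem_map_of_mem (f := Sym2.map Subtype.val) hmem
        have hsuv2 : Sym2.map Fin.val s(u, v) ∈ p.edges.map (Sym2.map Fin.val) :=
          List.mem_map_of_mem hsuv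
        rw [hp2] at hsuv2
        obtain ⟨k, hk, hke⟩ := List.mem_map.mp hsuv2
        rw [Sym2.map_pair_eq, Sym2.eq_iff] at hke
        rw [List.mem_range'_1] at hk
        omega
      rw [SimpleGraph.Walk.isHamiltonianCycle_iff_isCycle_and_support_count_tail_eq_one]
      refine ⟨(SimpleGraph.Walk.cons_isCycle_iff q.reverse huv').mpr ⟨hpath, hnotmem⟩, ?_⟩
      intro x
      rw [SimpleGraph.Walk.support_cons, List.tail_cons, SimpleGraph.Walk.support_reverse,
        @List.count_reverse _ instBEqOfDecidableEq]
      have e1 : ((q.support.map Subtype.val).map Fin.val).count x.val.val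
          = @List.count _ instBEqOfDecidableEq x q.support := by
        rw [List.count_map_of_injective _ _ Fin.val_injective,
          List.count_map_of_injective _ _ Subtype.val_injective]
        congr!
      rw [← e1, hq1, hp1]
      refine List.count_eq_one_of_mem (List.nodup_range' _) (List.mem_range'_1.mpr ⟨?_, ?_⟩)
      · exact Fin.le_def.mp x.2.1
      · have := Fin.le_def.mp x.2.2
        omega
    · -- edge set equality
      ext e
      simp only [Set.mem_setOf_eq, Set.mem_insert_iff, SimpleGraph.Walk.edges_cons,
        SimpleGraph.Walk.edges_reverse]
      constructor
      · rintro ⟨e', he', rfl⟩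
        rcases List.mem_cons.mp he' with rfl | hmem
        · left; simp [Sym2.map_pair_eq]
        · right
          rw [List.mem_reverse] at hmem
          have hpe : Sym2.map Subtype.val e' ∈ p.edges := by
            rw [← hq2]; exact List.mem_map_of_mem hmem
          have hpe2 : Sym2.map Fin.val (Sym2.map Subtype.val e')
              ∈ p.edges.map (Sym2.map Fin.val) := List.mem_map_of_mem hpe
          rw [hp2] at hpe2
          obtain ⟨k, hk, hke⟩ := List.mem_map.mp hpe2
          rw [List.mem_range'_1] at hk
          have hkn : k < n := by omega
          have hk1n : k + 1 < n := by omega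
          have hkv : ((⟨k, hkn⟩ : Fin n) + 1).val = k + 1 := hplus _ (by simpa using hk1n)
          refine ⟨⟨k, hkn⟩, Fin.le_def.mpr (by simpa using hk.1),
            Fin.lt_def.mpr (by simp; omega), ?_⟩
          apply Sym2.map.injective Fin.val_injective
          rw [Sym2.map_pair_eq, hkv]
          exact hke.symm
      · rintro (rfl | ⟨i, hui, hiv, rfl⟩)
        · exact ⟨s(⟨u, le_refl u, le_of_lt hlt⟩, ⟨v, le_of_lt hlt, le_refl v⟩),
            List.mem_cons_self, by simp [Sym2.map_pair_eq]⟩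
        · have hival : i.val < v.val := Fin.lt_def.mp hiv
          have hi1 : (i + 1).val = i.val + 1 := hplus i (by omega)
          have hmm : Sym2.map Fin.val s(i, i + 1) ∈ p.edges.map (Sym2.map Fin.val) := by
            rw [hp2]
            refine List.mem_map.mpr ⟨i.val,
              List.mem_range'_1.mpr ⟨Fin.le_def.mp hui, by omega⟩, ?_⟩
            rw [Sym2.map_pair_eq, hi1]
          obtain ⟨e₀, he₀, he₀e⟩ := List.mem_map.mp hmm
          have he₀i : e₀ = s(i, i + 1) := Sym2.map.injective Fin.val_injective he₀e
          rw [he₀i, ← hq2] at he₀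
          obtain ⟨e', he', he'e⟩ := List.mem_map.mp he₀
          exact ⟨e', List.mem_cons_of_mem _ (List.mem_reverse.mpr he'), he'e⟩
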